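/- (Sphere packing bound for injection codes) Let 0 ≤ k ≤ n, let d = 2e + 1 be an odd positive integer with d ≤ k, and let Γ ⊆ S_{k,n} be a set of injections such that any two distinct elements of Γ have Hamming distance at least d. Then |Γ| · b_e ≤ n!/(n−k)!, where b_e = Σ_{j=0}^{e} C(k,j) · Σ_{i=0}^{j} (−1)^i · C(j,i) · (n−k+j−i)!/(n−k)! is the size of any ball of radius e in S_{k,n}. -/

import Mathlib

open scoped Classical

/-- The Hamming distance between two injections `σ, τ : [k] ↪ [n]`:
the number of positions `i ∈ [k]` with `σ(i) ≠ τ(i)`. -/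
noncomputable def hamDist {k n : ℕ} (σ τ : Fin k ↪ Fin n) : ℕ :=
  (Finset.univ.filter fun i => σ i ≠ τ i).card

open Finset

section aux

variable {k n : ℕ}

/-- The set of positions where `τ` differs from `σ`. -/
noncomputable def dset (σ τ : Fin k ↪ Fin n) : Finset (Fin k) :=
  Finset.univ.filter fun i => τ i ≠ σ i

lemma hamDist_eq_card_dset (σ τ : Fin k ↪ Fin n) : hamDist σ τ = (dset σ τ).card := by
  unfold hamDist dset
  congr 1
  exact filter_congr fun i _ => by simp [ne_comm]

lemma hamDist_comm (σ τ : Fin k ↪ Fin n) : hamDist σ τ = hamDist τ σ := by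
  unfold hamDist
  congr 1
  exact filter_congr fun i _ => by simp [ne_comm]

lemma hamDist_triangle (σ τ ρ : Fin k ↪ Fin n) :
    hamDist σ ρ ≤ hamDist σ τ + hamDist τ ρ := by
  unfold hamDist
  refine le_trans (card_le_card ?_) (card_union_le _ _)
  intro i hi
  simp only [mem_filter, mem_univ, true_and, mem_union] at hi ⊢
  by_contra h
  push_neg at h
  exact hi (h.1.trans h.2)

/-- Number of injections agreeing with `σ` on `s`. -/
lemma card_fixed (σ : Fin k ↪ Fin n) (s : Finset (Fin k)) :
    (Finset.univ.filter fun τ : Fin k ↪ Fin n => ∀ i ∈ s, τ i = σ i).card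
      = (n - s.card).descFactorial (k - s.card) := by
  have h1 : (Finset.univ.filter fun τ : Fin k ↪ Fin n => ∀ i ∈ s, τ i = σ i).card
      = Fintype.card {τ : Fin k ↪ Fin n // ∀ i ∈ s, τ i = σ i} :=
    (Fintype.card_subtype _).symm
  have e : {τ : Fin k ↪ Fin n // ∀ i ∈ s, τ i = σ i}
      ≃ ((sᶜ : Finset (Fin k)) ↪ ((s.map σ)ᶜ : Finset (Fin n))) := by
    refine
      { toFun := fun τ => ⟨fun i => ⟨τ.1 i.1, ?_⟩, ?_⟩
        invFun := fun f =>
          ⟨⟨fun i => if h : i ∈ s then σ i else (f ⟨i, Finset.mem_compl.mpr h⟩ : Fin n), ?_⟩, ?_⟩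
        left_inv := ?_
        right_inv := ?_ }
    · -- membership
      simp only [mem_compl, mem_map]
      rintro ⟨x, hx, hxe⟩
      have : τ.1 x = τ.1 i.1 := by rw [τ.2 x hx, hxe]
      have hxi : x = i.1 := τ.1.injective this
      exact (mem_compl.mp i.2) (hxi ▸ hx)
    · intro a b hab
      exact Subtype.ext (τ.1.injective (congrArg Subtype.val hab))
    · -- injectivity of invFun
      intro a b hab
      by_cases ha : a ∈ s <;> by_cases hb : b ∈ s
      · simp only [dif_pos ha, dif_pos hb] at hab
        exact σ.injective hab
      · simp only [dif_pos ha, dif_neg hb] at hab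
        exact absurd (mem_map_of_mem σ ha)
          (by rw [hab]; exact mem_compl.mp (f ⟨b, Finset.mem_compl.mpr hb⟩).2)
      · simp only [dif_neg ha, dif_pos hb] at hab
        exact absurd (mem_map_of_mem σ hb)
          (by rw [← hab]; exact mem_compl.mp (f ⟨a, Finset.mem_compl.mpr ha⟩).2)
      · simp only [dif_neg ha, dif_neg hb] at hab
        have := f.injective (Subtype.ext hab)
        exact congrArg Subtype.val this
    · -- property of invFun
      intro i hi
      exact dif_pos hi
    · -- left_inv
      intro τ
      apply Subtype.ext
      apply Function.Embedding.ext
      intro i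
      by_cases hi : i ∈ s
      · simp only [Function.Embedding.coeFn_mk, dif_pos hi]
        exact (τ.2 i hi).symm
      · simp only [Function.Embedding.coeFn_mk, dif_neg hi]
        rfl
    · -- right_inv
      intro f
      apply Function.Embedding.ext
      intro i
      apply Subtype.ext
      simp only [Function.Embedding.coeFn_mk]
      have : (i : Fin k) ∉ s := Finset.mem_compl.mp i.2
      exact dif_neg this
  have c1 : Fintype.card (sᶜ : Finset (Fin k)) = k - s.card := by
    rw [Fintype.card_coe, card_compl]
    simp
  have c2 : Fintype.card ((s.map σ)ᶜ : Finset (Fin n)) = n - s.card := by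
    rw [Fintype.card_coe, card_compl, card_map]
    simp
  rw [h1, Fintype.card_congr e, Fintype.card_embedding_eq, c1, c2]

lemma auxInnerSum (A D : Finset (Fin k)) :
    (∑ B ∈ A.powerset, (-1 : ℤ) ^ ((A \ B).card) * (if D ⊆ B then 1 else 0))
      = (if D = A then 1 else 0) := by
  simp only [mul_ite, mul_one, mul_zero]
  rw [← Finset.sum_filter]
  by_cases hDA : D ⊆ A
  · have hsum : ∑ B ∈ A.powerset.filter (fun B => D ⊆ B), (-1 : ℤ) ^ ((A \ B).card)
        = ∑ C ∈ (A \ D).powerset, (-1 : ℤ) ^ C.card := by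
      refine Finset.sum_nbij' (fun B => A \ B) (fun C => A \ C) ?_ ?_ ?_ ?_ ?_
      · intro B hB
        simp only [mem_filter, mem_powerset] at hB
        exact mem_powerset.mpr (sdiff_subset_sdiff le_rfl hB.2)
      · intro C hC
        simp only [mem_powerset] at hC
        refine mem_filter.mpr ⟨mem_powerset.mpr sdiff_subset, ?_⟩
        intro x hx
        refine mem_sdiff.mpr ⟨hDA hx, fun hxC => ?_⟩
        exact (mem_sdiff.mp (hC hxC)).2 hx
      · intro B hB
        simp only [mem_filter, mem_powerset] at hB
        exact Finset.sdiff_sdiff_eq_self hB.1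
      · intro C hC
        simp only [mem_powerset] at hC
        exact Finset.sdiff_sdiff_eq_self (hC.trans sdiff_subset)
      · intro B hB
        rfl
    rw [hsum, sum_powerset_neg_one_pow_card]
    have hiff : (A \ D = ∅) ↔ (D = A) := by
      rw [sdiff_eq_empty_iff_subset]
      exact ⟨fun h => Finset.Subset.antisymm hDA h, fun h => h ▸ Finset.Subset.refl _⟩
    rw [if_congr hiff rfl rfl]
  · have h1 : A.powerset.filter (fun B => D ⊆ B) = ∅ := by
      refine filter_eq_empty_iff.mpr fun B hB hDB => hDA (hDB.trans (mem_powerset.mp hB))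
    rw [h1, sum_empty, if_neg (fun h => hDA (le_of_eq h))]

lemma card_dset_eq (hkn : k ≤ n) (σ : Fin k ↪ Fin n) (A : Finset (Fin k)) :
    ((Finset.univ.filter fun τ : Fin k ↪ Fin n => dset σ τ = A).card : ℤ)
      = ∑ i ∈ Finset.range (A.card + 1), (-1) ^ i * (Nat.choose A.card i : ℤ) *
          ((n - k + A.card - i).descFactorial (A.card - i) : ℤ) := by
  have hsub : ∀ B : Finset (Fin k), ∀ τ : Fin k ↪ Fin n,
      (dset σ τ ⊆ B) ↔ (∀ i ∈ Bᶜ, τ i = σ i) := by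
    intro B τ
    simp only [dset, Finset.subset_iff, mem_filter, mem_univ, true_and, mem_compl]
    constructor
    · intro h i hi
      by_contra hne
      exact hi (h hne)
    · intro h i hne
      by_contra hiB
      exact hne (h i hiB)
  -- Möbius step
  have mob : ((Finset.univ.filter fun τ : Fin k ↪ Fin n => dset σ τ = A).card : ℤ)
      = ∑ B ∈ A.powerset, (-1 : ℤ) ^ ((A \ B).card) *
          ((Finset.univ.filter fun τ : Fin k ↪ Fin n => dset σ τ ⊆ B).card : ℤ) := by
    have hcard : ∀ B : Finset (Fin k),
        ((Finset.univ.filter fun τ : Fin k ↪ Fin n => dset σ τ ⊆ B).card : ℤ)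
          = ∑ τ : Fin k ↪ Fin n, (if dset σ τ ⊆ B then (1 : ℤ) else 0) := by
      intro B
      rw [Finset.card_filter]
      push_cast
      rfl
    calc ((Finset.univ.filter fun τ : Fin k ↪ Fin n => dset σ τ = A).card : ℤ)
        = ∑ τ : Fin k ↪ Fin n, (if dset σ τ = A then (1 : ℤ) else 0) := by
          rw [Finset.card_filter]; push_cast; rfl
      _ = ∑ τ : Fin k ↪ Fin n, ∑ B ∈ A.powerset,
            (-1 : ℤ) ^ ((A \ B).card) * (if dset σ τ ⊆ B then 1 else 0) := by
          refine Finset.sum_congr rfl fun τ _ => (auxInnerSum A (dset σ τ)).symm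
      _ = ∑ B ∈ A.powerset, ∑ τ : Fin k ↪ Fin n,
            (-1 : ℤ) ^ ((A \ B).card) * (if dset σ τ ⊆ B then 1 else 0) := Finset.sum_comm
      _ = ∑ B ∈ A.powerset, (-1 : ℤ) ^ ((A \ B).card) *
            ((Finset.univ.filter fun τ : Fin k ↪ Fin n => dset σ τ ⊆ B).card : ℤ) := by
          refine Finset.sum_congr rfl fun B _ => ?_
          rw [hcard B, Finset.mul_sum]
  -- compute each count
  have hfix : ∀ B : Finset (Fin k), B ∈ A.powerset →
      ((Finset.univ.filter fun τ : Fin k ↪ Fin n => dset σ τ ⊆ B).card : ℤ)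
        = ((n - k + B.card).descFactorial B.card : ℤ) := by
    intro B _
    have : (Finset.univ.filter fun τ : Fin k ↪ Fin n => dset σ τ ⊆ B)
        = (Finset.univ.filter fun τ : Fin k ↪ Fin n => ∀ i ∈ Bᶜ, τ i = σ i) := by
      apply filter_congr
      intro τ _
      exact (by simpa using hsub B τ)
    rw [this, card_fixed σ Bᶜ]
    have hB : B.card ≤ k := B.card_le_univ.trans_eq (by simp)
    have h2 : (Bᶜ : Finset (Fin k)).card = k - B.card := by
      rw [card_compl]; simp
    rw [h2]
    congr 2 <;> omega
  rw [mob, Finset.sum_congr rfl (fun B hB => by rw [hfix B hB])]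
  -- group by cardinality
  rw [Finset.powerset_card_biUnion, Finset.sum_biUnion]
  · have hstep : ∀ b ∈ Finset.range (A.card + 1),
        (∑ B ∈ Finset.powersetCard b A, (-1 : ℤ) ^ ((A \ B).card) *
            ((n - k + B.card).descFactorial B.card : ℤ))
          = (Nat.choose A.card b : ℤ) * ((-1 : ℤ) ^ (A.card - b) *
              ((n - k + b).descFactorial b : ℤ)) := by
      intro b hb
      rw [Finset.sum_congr rfl (fun B hB => ?_), Finset.sum_const, Finset.card_powersetCard,
        nsmul_eq_mul]
      have hB := Finset.mem_powersetCard.mp hB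
      rw [hB.2, Finset.card_sdiff_of_subset hB.1, hB.2]
    rw [Finset.sum_congr rfl hstep]
    rw [← Finset.sum_range_reflect]
    refine Finset.sum_congr rfl fun i hi => ?_
    have hi' : i ≤ A.card := Nat.lt_succ_iff.mp (Finset.mem_range.mp hi)
    have h1 : A.card + 1 - 1 - i = A.card - i := by omega
    rw [h1]
    have h2 : A.card - (A.card - i) = i := by omega
    have h3 : Nat.choose A.card (A.card - i) = Nat.choose A.card i := Nat.choose_symm hi'
    have h4 : n - k + (A.card - i) = n - k + A.card - i := by omega
    rw [h2, h3, h4]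
    ring
  · -- pairwise disjoint powersetCard
    intro x hx y hy hxy
    refine Finset.disjoint_left.mpr fun B hBx hBy => hxy ?_
    rw [← (Finset.mem_powersetCard.mp hBx).2, ← (Finset.mem_powersetCard.mp hBy).2]

/-- Ball cardinality formula. -/
lemma ball_card (hkn : k ≤ n) (σ : Fin k ↪ Fin n) (e : ℕ) :
    ((Finset.univ.filter fun τ : Fin k ↪ Fin n => hamDist σ τ ≤ e).card : ℤ)
      = ∑ j ∈ Finset.range (e + 1), (Nat.choose k j : ℤ) *
          ∑ i ∈ Finset.range (j + 1), (-1) ^ i * (Nat.choose j i : ℤ) *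
            ((n - k + j - i).descFactorial (j - i) : ℤ) := by
  have h1 : (Finset.univ.filter fun τ : Fin k ↪ Fin n => hamDist σ τ ≤ e)
      = (Finset.range (e + 1)).biUnion
          (fun j => Finset.univ.filter fun τ : Fin k ↪ Fin n => hamDist σ τ = j) := by
    ext τ
    simp only [mem_filter, mem_univ, true_and, mem_biUnion, mem_range, Nat.lt_succ_iff]
    constructor
    · intro h; exact ⟨hamDist σ τ, h, rfl⟩
    · rintro ⟨j, hj, rfl⟩; exact hj
  have h2 : ∀ j : ℕ, (Finset.univ.filter fun τ : Fin k ↪ Fin n => hamDist σ τ = j)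
      = (Finset.powersetCard j (Finset.univ : Finset (Fin k))).biUnion
          (fun A => Finset.univ.filter fun τ : Fin k ↪ Fin n => dset σ τ = A) := by
    intro j
    ext τ
    simp only [mem_filter, mem_univ, true_and, mem_biUnion, mem_powersetCard_univ,
      hamDist_eq_card_dset]
    constructor
    · intro h; exact ⟨dset σ τ, h, rfl⟩
    · rintro ⟨A, hA, rfl⟩; exact hA
  rw [h1, card_biUnion]
  · push_cast
    refine Finset.sum_congr rfl fun j _ => ?_
    rw [h2 j, card_biUnion]
    · push_cast
      rw [Finset.sum_congr rfl (fun A hA => by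
        rw [card_dset_eq hkn σ A, (Finset.mem_powersetCard_univ.mp hA : A.card = j)]),
        Finset.sum_const, Finset.card_powersetCard, Finset.card_univ, Fintype.card_fin,
        nsmul_eq_mul]
    · intro A hA B hB hAB
      refine Finset.disjoint_left.mpr fun τ hτA hτB => ?_
      exact hAB ((mem_filter.mp hτA).2.symm.trans (mem_filter.mp hτB).2)
  · intro a ha b hb hab
    refine Finset.disjoint_left.mpr fun τ hτa hτb => ?_
    exact hab ((mem_filter.mp hτa).2.symm.trans (mem_filter.mp hτb).2)

end aux

/-- Sphere packing bound for injection codes: if `d = 2e + 1 ≤ k` is odd and `Γ ⊆ S_{k,n}`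
has pairwise Hamming distance at least `d`, then `|Γ| · b_e ≤ n!/(n−k)!`, where
`b_e = Σ_{j=0}^{e} C(k,j) · Σ_{i=0}^{j} (−1)^i · C(j,i) · (n−k+j−i)!/(n−k)!`
is the size of any ball of radius `e` in `S_{k,n}`. -/
theorem stmt_13 (k n e : ℕ) (hkn : k ≤ n) (hd : 2 * e + 1 ≤ k)
    (Γ : Finset (Fin k ↪ Fin n))
    (hΓ : ∀ σ ∈ Γ, ∀ τ ∈ Γ, σ ≠ τ → 2 * e + 1 ≤ hamDist σ τ) :
    (Γ.card : ℤ) *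
        (∑ j ∈ Finset.range (e + 1), (Nat.choose k j : ℤ) *
          ∑ i ∈ Finset.range (j + 1), (-1) ^ i * (Nat.choose j i : ℤ) *
            ((Nat.factorial (n - k + j - i) / Nat.factorial (n - k) : ℕ) : ℤ)) ≤
      ((Nat.factorial n / Nat.factorial (n - k) : ℕ) : ℤ) := by
  classical
  -- rewrite the target sum in terms of descFactorial
  have hfact : (∑ j ∈ Finset.range (e + 1), (Nat.choose k j : ℤ) *
        ∑ i ∈ Finset.range (j + 1), (-1) ^ i * (Nat.choose j i : ℤ) *
          ((Nat.factorial (n - k + j - i) / Nat.factorial (n - k) : ℕ) : ℤ))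
      = ∑ j ∈ Finset.range (e + 1), (Nat.choose k j : ℤ) *
          ∑ i ∈ Finset.range (j + 1), (-1) ^ i * (Nat.choose j i : ℤ) *
            ((n - k + j - i).descFactorial (j - i) : ℤ) := by
    refine Finset.sum_congr rfl fun j _ => ?_
    congr 1
    refine Finset.sum_congr rfl fun i hi => ?_
    have hi' : i ≤ j := Nat.lt_succ_iff.mp (Finset.mem_range.mp hi)
    have hle : j - i ≤ n - k + j - i := by omega
    have harg : n - k + j - i - (j - i) = n - k := by omega
    rw [Nat.descFactorial_eq_div hle, harg]
  rw [hfact]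
  set B : ℤ := ∑ j ∈ Finset.range (e + 1), (Nat.choose k j : ℤ) *
      ∑ i ∈ Finset.range (j + 1), (-1) ^ i * (Nat.choose j i : ℤ) *
        ((n - k + j - i).descFactorial (j - i) : ℤ) with hB
  have hball : ∀ σ : Fin k ↪ Fin n,
      ((Finset.univ.filter fun τ : Fin k ↪ Fin n => hamDist σ τ ≤ e).card : ℤ) = B :=
    fun σ => ball_card hkn σ e
  have hdisj : ∀ σ₁ ∈ Γ, ∀ σ₂ ∈ Γ, σ₁ ≠ σ₂ →
      Disjoint (Finset.univ.filter fun τ : Fin k ↪ Fin n => hamDist σ₁ τ ≤ e)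
        (Finset.univ.filter fun τ : Fin k ↪ Fin n => hamDist σ₂ τ ≤ e) := by
    intro σ₁ h₁ σ₂ h₂ hne
    refine Finset.disjoint_left.mpr fun τ hτ₁ hτ₂ => ?_
    have d₁ := (Finset.mem_filter.mp hτ₁).2
    have d₂ := (Finset.mem_filter.mp hτ₂).2
    have htri := hamDist_triangle σ₁ τ σ₂
    have h2 : hamDist τ σ₂ = hamDist σ₂ τ := hamDist_comm τ σ₂
    have := hΓ σ₁ h₁ σ₂ h₂ hne
    omega
  have hsum : ∑ σ ∈ Γ, (Finset.univ.filter fun τ : Fin k ↪ Fin n => hamDist σ τ ≤ e).card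
      ≤ Fintype.card (Fin k ↪ Fin n) := by
    rw [← Finset.card_biUnion hdisj]
    exact (Finset.card_le_univ _).trans_eq Finset.card_univ
  have hcard : Fintype.card (Fin k ↪ Fin n) = Nat.factorial n / Nat.factorial (n - k) := by
    rw [Fintype.card_embedding_eq, Fintype.card_fin, Fintype.card_fin,
      Nat.descFactorial_eq_div hkn]
  calc (Γ.card : ℤ) * B
      = ∑ σ ∈ Γ, B := by rw [Finset.sum_const, nsmul_eq_mul]
    _ = ∑ σ ∈ Γ, ((Finset.univ.filter fun τ : Fin k ↪ Fin n => hamDist σ τ ≤ e).card : ℤ) :=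
        (Finset.sum_congr rfl fun σ _ => (hball σ).symm)
    _ = ((∑ σ ∈ Γ, (Finset.univ.filter fun τ : Fin k ↪ Fin n => hamDist σ τ ≤ e).card : ℕ) : ℤ) :=
        by push_cast; rfl
    _ ≤ (Fintype.card (Fin k ↪ Fin n) : ℤ) := by exact_mod_cast hsum
    _ = ((Nat.factorial n / Nat.factorial (n - k) : ℕ) : ℤ) := by rw [hcard]
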